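/- arXiv:1909.12296 — 3 statements merged into one kernel-verified Lean document; each statement's English description precedes it below -/
import Mathlib

section
/- Let M be an n×n Hermitian complex matrix with eigenvalues μ₁ ≥ ... ≥ μₙ, and let M' be a principal submatrix of M of size (n−1)×(n−1) with eigenvalues ν₁ ≥ ... ≥ ν_{n−1}. Then the eigenvalues interlace: μᵢ ≥ νᵢ ≥ μ_{i+1} for all 1 ≤ i ≤ n−1. -/
open Polynomial Matrix


variable {m : Type*} [Fintype m] [DecidableEq m]

theorem charpoly_unitary_conj (V : Matrix.unitaryGroup m ℂ) (D : Matrix m m ℂ) :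
    ((V : Matrix m m ℂ) * D * (star V : Matrix m m ℂ)).charpoly = D.charpoly := by
  have hV : (V : Matrix m m ℂ) * (star V : Matrix m m ℂ) = 1 := by simp
  have hV' : (star V : Matrix m m ℂ) * (V : Matrix m m ℂ) = 1 := by simp
  let f : Matrix m m ℂ →+* Matrix m m ℂ[X] := (C : ℂ →+* ℂ[X]).mapMatrix
  unfold Matrix.charpoly
  have hcm : charmatrix ((V : Matrix m m ℂ) * D * (star V : Matrix m m ℂ))
      = f (V : Matrix m m ℂ) * charmatrix D * f (star V : Matrix m m ℂ) := by
    unfold charmatrix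
    rw [mul_sub, sub_mul]
    congr 1
    · rw [mul_assoc, scalar_commute (X : ℂ[X]) (fun r => (Commute.all _ _)) _,
        ← mul_assoc, ← map_mul f, hV]
      simp [f]
    · rw [← map_mul f, ← map_mul f]
  rw [hcm, det_mul, det_mul, mul_comm, ← mul_assoc, ← det_mul, ← map_mul f, hV']
  simp [f]

theorem charpoly_herm {A : Matrix m m ℂ} (hA : A.IsHermitian) :
    A.charpoly = ∏ i, (X - C (hA.eigenvalues i : ℂ)) := by
  conv_lhs => rw [hA.spectral_theorem, Unitary.conjStarAlgAut_apply]
  rw [charpoly_unitary_conj]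
  unfold Matrix.charpoly
  have : charmatrix (diagonal (RCLike.ofReal ∘ hA.eigenvalues) : Matrix m m ℂ)
      = diagonal (fun i => (X : ℂ[X]) - C (hA.eigenvalues i : ℂ)) := by
    unfold charmatrix
    ext i j
    by_cases h : i = j <;> simp [h, diagonal, Matrix.map]
  rw [this, det_diagonal]


-- multiset of values from product equality
theorem perm_of_prod_eq {m : ℕ} (μ lam : Fin m → ℝ) (hμ : Antitone μ)
    (h : (∏ i, ((X : ℂ[X]) - C (μ i : ℂ))) = ∏ i, ((X : ℂ[X]) - C (lam i : ℂ))) :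
    ∃ σ : Equiv.Perm (Fin m), ∀ j, lam (σ j) = μ j := by
  -- multiset equality over ℝ
  have e : ∀ f : Fin m → ℝ, (∏ i, ((X : ℂ[X]) - C (f i : ℂ)))
      = ((Multiset.map (fun i => (f i : ℂ)) Finset.univ.val).map (fun a => X - C a)).prod := by
    intro f; rw [Multiset.map_map, Finset.prod_eq_multiset_prod]; rfl
  have hroots : Multiset.map (fun i => (μ i : ℂ)) Finset.univ.val
      = Multiset.map (fun i => (lam i : ℂ)) Finset.univ.val := by
    have h1 := congrArg Polynomial.roots h
    rwa [e μ, e lam, roots_multiset_prod_X_sub_C, roots_multiset_prod_X_sub_C] at h1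
  have hmul : Multiset.map μ Finset.univ.val = Multiset.map lam Finset.univ.val := by
    apply Multiset.map_injective (f := (fun x : ℝ => (x : ℂ))) Complex.ofReal_injective
    rwa [Multiset.map_map, Multiset.map_map]
  set σ : Equiv.Perm (Fin m) := (Fin.revPerm).trans (Tuple.sort lam) with hσ
  have hanti : Antitone (lam ∘ σ) := by
    intro a b hab
    exact Tuple.monotone_sort lam (by simpa using Fin.rev_le_rev.mpr hab)
  refine ⟨σ, ?_⟩
  have hperm : (List.ofFn μ).Perm (List.ofFn (lam ∘ σ)) := by
    rw [← Multiset.coe_eq_coe]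
    have : (Multiset.map (lam ∘ σ) Finset.univ.val) = Multiset.map lam Finset.univ.val := by
      have : Multiset.map (⇑σ) Finset.univ.val = Finset.univ.val := by
        have := Finset.map_univ_equiv σ
        calc Multiset.map (⇑σ) Finset.univ.val = (Finset.univ.map σ.toEmbedding).val := rfl
        _ = Finset.univ.val := by rw [Finset.map_univ_equiv]
      conv_rhs => rw [← this, Multiset.map_map]
    rw [List.ofFn_eq_map, List.ofFn_eq_map]
    show Multiset.map μ ↑(List.finRange m) = Multiset.map (lam ∘ σ) ↑(List.finRange m)
    rw [show ((List.finRange m : Multiset (Fin m))) = Finset.univ.val from rfl, hmul, this]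
  have hs1 : (List.ofFn μ).Pairwise (· ≥ ·) := by
    rw [List.pairwise_ofFn]; exact fun {a b} hab => hμ hab.le
  have hs2 : (List.ofFn (lam ∘ σ)).Pairwise (· ≥ ·) := by
    rw [List.pairwise_ofFn]; exact fun {a b} hab => hanti hab.le
  have := List.Perm.eq_of_pairwise (fun a b _ _ h1 h2 => le_antisymm h2 h1) hs1 hs2 hperm
  have hfun : μ = lam ∘ σ := List.ofFn_injective this
  exact fun j => (congrFun hfun j).symm


variable {ι : Type*} [Fintype ι] [DecidableEq ι]

/-- Functions supported on a finite set, as a submodule. -/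
noncomputable def suppSub (T : Finset ι) : Submodule ℂ (ι → ℂ) where
  carrier := {x | ∀ j ∉ T, x j = 0}
  add_mem' := fun hx hy j hj => by simp [hx j hj, hy j hj]
  zero_mem' := fun j hj => rfl
  smul_mem' := fun c x hx j hj => by simp [hx j hj]

theorem mem_suppSub {T : Finset ι} {x : ι → ℂ} : x ∈ suppSub T ↔ ∀ j ∉ T, x j = 0 := Iff.rfl

noncomputable def suppSubEquiv (T : Finset ι) : suppSub T ≃ₗ[ℂ] (T → ℂ) where
  toFun x := fun j => x.1 j
  invFun g := ⟨fun j => if h : j ∈ T then g ⟨j, h⟩ else 0, fun j hj => by simp [hj]⟩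
  left_inv := by
    rintro ⟨x, hx⟩
    ext j
    by_cases h : j ∈ T <;> simp [h]
    exact (hx j h).symm
  right_inv := by intro g; ext j; simp
  map_add' x y := rfl
  map_smul' c x := rfl

theorem finrank_suppSub (T : Finset ι) : Module.finrank ℂ (suppSub T) = T.card := by
  rw [(suppSubEquiv T).finrank_eq, Module.finrank_fintype_fun_eq_card, Fintype.card_coe]

theorem re_dot_self (x : ι → ℂ) : (star x ⬝ᵥ x).re = ∑ i, Complex.normSq (x i) := by
  rw [dotProduct, Complex.re_sum]
  exact Finset.sum_congr rfl fun i _ => by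
    simp [Complex.normSq_apply, Complex.mul_re]

theorem re_dot_self_pos {x : ι → ℂ} (hx : x ≠ 0) : 0 < (star x ⬝ᵥ x).re := by
  rw [re_dot_self]
  have h1 : ∃ i, x i ≠ 0 := by
    by_contra h
    push_neg at h
    exact hx (funext h)
  obtain ⟨i, hi⟩ := h1
  exact Finset.sum_pos' (fun j _ => Complex.normSq_nonneg _)
    ⟨i, Finset.mem_univ i, by simpa [Complex.normSq_pos] using hi⟩

theorem unitary_dot (V : Matrix.unitaryGroup ι ℂ) (a b : ι → ℂ) :
    star ((V : Matrix ι ι ℂ) *ᵥ a) ⬝ᵥ ((V : Matrix ι ι ℂ) *ᵥ b) = star a ⬝ᵥ b := by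
  rw [star_mulVec, dotProduct_mulVec, vecMul_vecMul]
  have : (V : Matrix ι ι ℂ)ᴴ * (V : Matrix ι ι ℂ) = 1 := by
    simpa [star_eq_conjTranspose] using V.2.1
  rw [this, vecMul_one]

theorem re_dot_diag (lam : ι → ℝ) (y : ι → ℂ) :
    (star y ⬝ᵥ ((diagonal (fun i => (lam i : ℂ))) *ᵥ y)).re
      = ∑ i, lam i * Complex.normSq (y i) := by
  rw [dotProduct, Complex.re_sum]
  refine Finset.sum_congr rfl fun i _ => ?_
  rw [mulVec_diagonal]
  simp [Complex.normSq_apply, Complex.mul_re, Complex.mul_im]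
  ring

/-- Span of the eigenvectors of a Hermitian matrix indexed by `T`. -/
noncomputable def spanSub {A : Matrix ι ι ℂ} (hA : A.IsHermitian) (T : Finset ι) :
    Submodule ℂ (ι → ℂ) :=
  Submodule.map (Matrix.mulVecLin (hA.eigenvectorUnitary : Matrix ι ι ℂ)) (suppSub T)

theorem unitary_mulVec_injective (V : Matrix.unitaryGroup ι ℂ) :
    Function.Injective ((V : Matrix ι ι ℂ).mulVec) := by
  intro a b hab
  have h := congrArg (fun v => (star (V : Matrix ι ι ℂ)) *ᵥ v) hab
  simp only [mulVec_mulVec] at h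
  rwa [Unitary.coe_star_mul_self V, one_mulVec, one_mulVec] at h

theorem finrank_spanSub {A : Matrix ι ι ℂ} (hA : A.IsHermitian) (T : Finset ι) :
    Module.finrank ℂ (spanSub hA T) = T.card := by
  rw [spanSub, ← finrank_suppSub (ι := ι) T]
  exact (Submodule.equivMapOfInjective _ (unitary_mulVec_injective _) (suppSub T)).finrank_eq.symm

theorem quad_eq {A : Matrix ι ι ℂ} (hA : A.IsHermitian) (y : ι → ℂ) :
    (star ((hA.eigenvectorUnitary : Matrix ι ι ℂ) *ᵥ y) ⬝ᵥ
      (A *ᵥ ((hA.eigenvectorUnitary : Matrix ι ι ℂ) *ᵥ y))).re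
      = ∑ i, hA.eigenvalues i * Complex.normSq (y i) := by
  have hAV : A *ᵥ ((hA.eigenvectorUnitary : Matrix ι ι ℂ) *ᵥ y)
      = (hA.eigenvectorUnitary : Matrix ι ι ℂ) *ᵥ ((diagonal (fun i => (hA.eigenvalues i : ℂ))) *ᵥ y) := by
    rw [mulVec_mulVec, mulVec_mulVec]
    have hsp := hA.spectral_theorem
    have key : A * (hA.eigenvectorUnitary : Matrix ι ι ℂ)
        = (hA.eigenvectorUnitary : Matrix ι ι ℂ) * diagonal (fun i => (hA.eigenvalues i : ℂ)) :=
      calc A * (hA.eigenvectorUnitary : Matrix ι ι ℂ)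
        = (hA.eigenvectorUnitary : Matrix ι ι ℂ) * diagonal (RCLike.ofReal ∘ hA.eigenvalues)
          * (star (hA.eigenvectorUnitary : Matrix ι ι ℂ))
          * (hA.eigenvectorUnitary : Matrix ι ι ℂ) := by rw [Unitary.conjStarAlgAut_apply] at hsp; rw [← hsp]
      _ = (hA.eigenvectorUnitary : Matrix ι ι ℂ) * diagonal (fun i => (hA.eigenvalues i : ℂ)) := by
          rw [mul_assoc, Unitary.coe_star_mul_self, mul_one]
          rfl
    rw [key]
  rw [hAV, unitary_dot, re_dot_diag]

theorem quad_le {A : Matrix ι ι ℂ} (hA : A.IsHermitian) {T : Finset ι} {c : ℝ}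
    (hT : ∀ i ∈ T, hA.eigenvalues i ≤ c) {x : ι → ℂ} (hx : x ∈ spanSub hA T) :
    (star x ⬝ᵥ (A *ᵥ x)).re ≤ c * (star x ⬝ᵥ x).re := by
  obtain ⟨y, hy, rfl⟩ := hx
  rw [show ((hA.eigenvectorUnitary : Matrix ι ι ℂ)).mulVecLin y
    = (hA.eigenvectorUnitary : Matrix ι ι ℂ) *ᵥ y from rfl]
  rw [quad_eq, unitary_dot, re_dot_self]
  rw [Finset.mul_sum]
  rw [← Finset.sum_subset (Finset.subset_univ T) (by
    intro i _ hi
    simp [mem_suppSub.mp hy i hi]),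
    ← Finset.sum_subset (Finset.subset_univ T) (by
    intro i _ hi
    simp [mem_suppSub.mp hy i hi])]
  exact Finset.sum_le_sum fun i hi =>
    mul_le_mul_of_nonneg_right (hT i hi) (Complex.normSq_nonneg _)

theorem quad_ge {A : Matrix ι ι ℂ} (hA : A.IsHermitian) {T : Finset ι} {c : ℝ}
    (hT : ∀ i ∈ T, c ≤ hA.eigenvalues i) {x : ι → ℂ} (hx : x ∈ spanSub hA T) :
    c * (star x ⬝ᵥ x).re ≤ (star x ⬝ᵥ (A *ᵥ x)).re := by
  obtain ⟨y, hy, rfl⟩ := hx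
  rw [show ((hA.eigenvectorUnitary : Matrix ι ι ℂ)).mulVecLin y
    = (hA.eigenvectorUnitary : Matrix ι ι ℂ) *ᵥ y from rfl]
  rw [quad_eq, unitary_dot, re_dot_self]
  rw [Finset.mul_sum]
  rw [← Finset.sum_subset (Finset.subset_univ T) (by
    intro i _ hi
    simp [mem_suppSub.mp hy i hi]),
    ← Finset.sum_subset (Finset.subset_univ T) (by
    intro i _ hi
    simp [mem_suppSub.mp hy i hi])]
  exact Finset.sum_le_sum fun i hi =>
    mul_le_mul_of_nonneg_right (hT i hi) (Complex.normSq_nonneg _)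

/-- Inserting a zero at position `k`, as a linear map. -/
noncomputable def embL {n : ℕ} (k : Fin (n + 1)) : (Fin n → ℂ) →ₗ[ℂ] (Fin (n + 1) → ℂ) where
  toFun v := Fin.insertNth k 0 v
  map_add' v w := by
    ext j
    refine Fin.succAboveCases k ?_ ?_ j
    · simp
    · intro i
      simp [Fin.insertNth_apply_succAbove]
  map_smul' c v := by
    ext j
    refine Fin.succAboveCases k ?_ ?_ j
    · simp
    · intro i
      simp [Fin.insertNth_apply_succAbove]

theorem embL_injective {n : ℕ} (k : Fin (n + 1)) : Function.Injective (embL k) := by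
  intro a b hab
  ext i
  have := congrFun hab (k.succAbove i)
  simpa [embL, Fin.insertNth_apply_succAbove] using this

theorem embL_dot {n : ℕ} (k : Fin (n + 1)) (v w : Fin n → ℂ) :
    star (embL k v) ⬝ᵥ (embL k w) = star v ⬝ᵥ w := by
  rw [dotProduct, Fin.sum_univ_succAbove _ k]
  simp [embL, Fin.insertNth_apply_succAbove, dotProduct]

theorem embL_quad {n : ℕ} (k : Fin (n + 1)) (M : Matrix (Fin (n + 1)) (Fin (n + 1)) ℂ)
    (v : Fin n → ℂ) :
    star (embL k v) ⬝ᵥ (M *ᵥ (embL k v))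
      = star v ⬝ᵥ ((M.submatrix k.succAbove k.succAbove) *ᵥ v) := by
  rw [dotProduct, Fin.sum_univ_succAbove _ k]
  have h0 : (embL k v) k = 0 := by simp [embL]
  simp only [Pi.star_apply, h0, star_zero, zero_mul, zero_add]
  refine Finset.sum_congr rfl fun i _ => ?_
  congr 1
  · simp [embL, Fin.insertNth_apply_succAbove]
  · rw [mulVec, dotProduct, Fin.sum_univ_succAbove _ k, h0]
    simp [mulVec, dotProduct, submatrix, embL, Fin.insertNth_apply_succAbove]

theorem exists_common_vec {n : ℕ} {M : Matrix (Fin (n + 1)) (Fin (n + 1)) ℂ}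
    (hM : M.IsHermitian) {k : Fin (n + 1)}
    (hN : (M.submatrix k.succAbove k.succAbove).IsHermitian)
    (T : Finset (Fin (n + 1))) (S : Finset (Fin n)) (hcard : n + 1 < T.card + S.card) :
    ∃ x, x ≠ 0 ∧ x ∈ spanSub hM T ∧ x ∈ Submodule.map (embL k) (spanSub hN S) := by
  set A := spanSub hM T
  set B := Submodule.map (embL k) (spanSub hN S)
  have hA : Module.finrank ℂ A = T.card := finrank_spanSub hM T
  have hB : Module.finrank ℂ B = S.card := by
    rw [show B = Submodule.map (embL k) (spanSub hN S) from rfl,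
      ← (Submodule.equivMapOfInjective _ (embL_injective k) (spanSub hN S)).finrank_eq]
    exact finrank_spanSub hN S
  have hsum := Submodule.finrank_sup_add_finrank_inf_eq A B
  have hle : Module.finrank ℂ ↥(A ⊔ B) ≤ n + 1 := by
    have := Submodule.finrank_le (A ⊔ B)
    rwa [Module.finrank_fintype_fun_eq_card, Fintype.card_fin] at this
  have hpos : 0 < Module.finrank ℂ ↥(A ⊓ B) := by omega
  have hne : A ⊓ B ≠ ⊥ := by
    intro h
    rw [h, finrank_bot] at hpos
    exact lt_irrefl 0 hpos
  obtain ⟨x, hx, hx0⟩ := Submodule.exists_mem_ne_zero_of_ne_bot hne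
  exact ⟨x, hx0, hx.1, hx.2⟩

theorem key1 {n : ℕ} {M : Matrix (Fin (n + 1)) (Fin (n + 1)) ℂ}
    (hM : M.IsHermitian) {k : Fin (n + 1)}
    (hN : (M.submatrix k.succAbove k.succAbove).IsHermitian)
    (T : Finset (Fin (n + 1))) (S : Finset (Fin n)) (hcard : n + 1 < T.card + S.card)
    {c d : ℝ} (hT : ∀ i ∈ T, hM.eigenvalues i ≤ c) (hS : ∀ j ∈ S, d ≤ hN.eigenvalues j) :
    d ≤ c := by
  obtain ⟨x, hx0, hxA, hxB⟩ := exists_common_vec hM hN T S hcard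
  obtain ⟨w, hw, rfl⟩ := hxB
  have h1 : (star (embL k w) ⬝ᵥ (M *ᵥ embL k w)).re ≤ c * (star (embL k w) ⬝ᵥ (embL k w)).re :=
    quad_le hM hT hxA
  have h2 : d * (star w ⬝ᵥ w).re ≤ (star w ⬝ᵥ ((M.submatrix k.succAbove k.succAbove) *ᵥ w)).re :=
    quad_ge hN hS hw
  rw [embL_quad, embL_dot] at h1
  have hw0 : w ≠ 0 := by
    intro h
    exact hx0 (by rw [h, map_zero])
  have hpos := re_dot_self_pos hw0
  have := le_trans h2 h1
  exact le_of_mul_le_mul_right this hpos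

theorem key2 {n : ℕ} {M : Matrix (Fin (n + 1)) (Fin (n + 1)) ℂ}
    (hM : M.IsHermitian) {k : Fin (n + 1)}
    (hN : (M.submatrix k.succAbove k.succAbove).IsHermitian)
    (T : Finset (Fin (n + 1))) (S : Finset (Fin n)) (hcard : n + 1 < T.card + S.card)
    {c d : ℝ} (hT : ∀ i ∈ T, d ≤ hM.eigenvalues i) (hS : ∀ j ∈ S, hN.eigenvalues j ≤ c) :
    d ≤ c := by
  obtain ⟨x, hx0, hxA, hxB⟩ := exists_common_vec hM hN T S hcard
  obtain ⟨w, hw, rfl⟩ := hxB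
  have h1 : d * (star (embL k w) ⬝ᵥ (embL k w)).re ≤ (star (embL k w) ⬝ᵥ (M *ᵥ embL k w)).re :=
    quad_ge hM hT hxA
  have h2 : (star w ⬝ᵥ ((M.submatrix k.succAbove k.succAbove) *ᵥ w)).re ≤ c * (star w ⬝ᵥ w).re :=
    quad_le hN hS hw
  rw [embL_quad, embL_dot] at h1
  have hw0 : w ≠ 0 := by
    intro h
    exact hx0 (by rw [h, map_zero])
  have hpos := re_dot_self_pos hw0
  have := le_trans h1 h2
  exact le_of_mul_le_mul_right this hpos

/-- Cauchy's interlacing theorem: the eigenvalues (in decreasing order, with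
multiplicity) of a principal submatrix of a Hermitian matrix interlace those of the
matrix itself. -/
theorem stmt4 {n : ℕ} (M : Matrix (Fin (n + 1)) (Fin (n + 1)) ℂ) (hM : M.IsHermitian)
    (k : Fin (n + 1))
    (μ : Fin (n + 1) → ℝ) (hμa : Antitone μ)
    (hμ : M.charpoly = ∏ i : Fin (n + 1), (X - C (μ i : ℂ)))
    (ν : Fin n → ℝ) (hνa : Antitone ν)
    (hν : (M.submatrix k.succAbove k.succAbove).charpoly
      = ∏ i : Fin n, (X - C (ν i : ℂ))) :
    ∀ i : Fin n, μ i.castSucc ≥ ν i ∧ ν i ≥ μ i.succ := by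
  have hN : (M.submatrix k.succAbove k.succAbove).IsHermitian := hM.submatrix _
  obtain ⟨σ, hσ⟩ := perm_of_prod_eq μ hM.eigenvalues hμa (by rw [← hμ, charpoly_herm hM])
  obtain ⟨τ, hτ⟩ := perm_of_prod_eq ν hN.eigenvalues hνa (by rw [← hν, charpoly_herm hN])
  intro i
  constructor
  · -- ν i ≤ μ i.castSucc
    refine key1 hM hN ((Finset.Ici i.castSucc).image σ) ((Finset.Iic i).image τ) ?_ ?_ ?_
    · rw [Finset.card_image_of_injective _ σ.injective,
        Finset.card_image_of_injective _ τ.injective, Fin.card_Ici, Fin.card_Iic,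
        Fin.coe_castSucc]
      have := i.isLt
      omega
    · rintro x hx
      obtain ⟨j, hj, rfl⟩ := Finset.mem_image.mp hx
      rw [hσ j]
      exact hμa (Finset.mem_Ici.mp hj)
    · rintro x hx
      obtain ⟨j, hj, rfl⟩ := Finset.mem_image.mp hx
      rw [hτ j]
      exact hνa (Finset.mem_Iic.mp hj)
  · -- μ i.succ ≤ ν i
    refine key2 hM hN ((Finset.Iic i.succ).image σ) ((Finset.Ici i).image τ) ?_ ?_ ?_
    · rw [Finset.card_image_of_injective _ σ.injective,
        Finset.card_image_of_injective _ τ.injective, Fin.card_Iic, Fin.card_Ici,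
        Fin.val_succ]
      have := i.isLt
      omega
    · rintro x hx
      obtain ⟨j, hj, rfl⟩ := Finset.mem_image.mp hx
      rw [hσ j]
      exact hμa (Finset.mem_Iic.mp hj)
    · rintro x hx
      obtain ⟨j, hj, rfl⟩ := Finset.mem_image.mp hx
      rw [hτ j]
      exact hνa (Finset.mem_Ici.mp hj)
end

section
/- Let A ∈ Mₙ(ℍ) be a quaternionic matrix and ι : Mₙ(ℍ) → M_{2n}(ℂ) the standard embedding. Then the characteristic polynomial of ι(A), which has degree 2n, factors as P(t)·conj(P)(t) for some monic complex polynomial P of degree n, where conj(P) is the polynomial obtained by conjugating all coefficients of P. In particular, the complex eigenvalues of ι(A) come in conjugate pairs, and every real eigenvalue of ι(A) has even multiplicity. -/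
open Matrix Polynomial

open Matrix

/-- The complex matrix `A₁` in the decomposition `A = A₁ + A₂ j` of a quaternionic
matrix, identifying `ℂ = ℝ + ℝi ⊆ ℍ`. -/
def qPart1 {n : ℕ} (A : Matrix (Fin n) (Fin n) (Quaternion ℝ)) :
    Matrix (Fin n) (Fin n) ℂ :=
  fun i j => ⟨(A i j).re, (A i j).imI⟩

/-- The complex matrix `A₂` in the decomposition `A = A₁ + A₂ j` of a quaternionic
matrix. -/
def qPart2 {n : ℕ} (A : Matrix (Fin n) (Fin n) (Quaternion ℝ)) :
    Matrix (Fin n) (Fin n) ℂ :=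
  fun i j => ⟨(A i j).imJ, (A i j).imK⟩

/-- The standard embedding `ι : Mₙ(ℍ) → M₂ₙ(ℂ)` sending `A = A₁ + A₂ j` to the
block matrix `(A₁, A₂; −conj A₂, conj A₁)`. -/
def qiota {n : ℕ} (A : Matrix (Fin n) (Fin n) (Quaternion ℝ)) :
    Matrix (Fin n ⊕ Fin n) (Fin n ⊕ Fin n) ℂ :=
  Matrix.fromBlocks (qPart1 A) (qPart2 A)
    (-(qPart2 A).map (starRingEnd ℂ)) ((qPart1 A).map (starRingEnd ℂ))


namespace Stmt8Aux

open Module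

noncomputable section

def Jmat (n : ℕ) : Matrix (Fin n ⊕ Fin n) (Fin n ⊕ Fin n) ℂ :=
  fromBlocks 0 1 (-1) 0

variable {n : ℕ}

lemma map_conj_conj {m k : Type*} (M : Matrix m k ℂ) :
    (M.map (starRingEnd ℂ)).map (starRingEnd ℂ) = M := by
  ext i j; simp [Matrix.map_apply]

lemma J_mul_J : Jmat n * Jmat n = -1 := by
  simp [Jmat, fromBlocks_multiply, ← fromBlocks_one, fromBlocks_neg]

lemma J_conj (A : Matrix (Fin n) (Fin n) (Quaternion ℝ)) :
    Jmat n * ((qiota A).map (starRingEnd ℂ)) = qiota A * Jmat n := by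
  have hneg : ∀ (M : Matrix (Fin n) (Fin n) ℂ), (-M).map (starRingEnd ℂ) = -(M.map (starRingEnd ℂ)) := by
    intro M; ext i j; simp [Matrix.map_apply]
  simp only [Jmat, qiota, fromBlocks_map, fromBlocks_multiply, hneg, map_conj_conj,
    Matrix.zero_mul, Matrix.one_mul, Matrix.mul_one, Matrix.mul_zero, Matrix.neg_mul,
    Matrix.mul_neg, add_zero, zero_add, neg_neg, neg_zero]

lemma det_J_ne_zero : (Jmat n).det ≠ 0 := by
  intro h
  have h2 : (Jmat n).det * (Jmat n).det = 1 := by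
    rw [← det_mul, J_mul_J, det_neg, det_one]
    simp [Fintype.card_sum, Even.neg_one_pow ⟨n, rfl⟩]
  rw [h, mul_zero] at h2
  exact zero_ne_one h2

lemma charpoly_conj_aux {m : Type*} [Fintype m] [DecidableEq m] (J B : Matrix m m ℂ)
    (hJ : J.det ≠ 0) (h : J * (B.map (starRingEnd ℂ)) = B * J) :
    (B.map (starRingEnd ℂ)).charpoly = B.charpoly := by
  have key : (J.map C) * charmatrix (B.map (starRingEnd ℂ)) = charmatrix B * (J.map C) := by
    rw [charmatrix, charmatrix, mul_sub, sub_mul]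
    congr 1
    · exact (Matrix.scalar_commute X (fun r => Commute.all _ _) (J.map C)).symm.eq
    · calc J.map C * (B.map (starRingEnd ℂ)).map C
          = (J * B.map (starRingEnd ℂ)).map C := (Matrix.map_mul (f := (C : ℂ →+* ℂ[X]))).symm
        _ = (B * J).map C := by rw [h]
        _ = B.map C * J.map C := Matrix.map_mul (f := (C : ℂ →+* ℂ[X]))
  have hdet := congrArg det key
  rw [det_mul, det_mul] at hdet
  have hJC : (J.map C).det = C J.det := by
    rw [RingHom.map_det]; rfl
  rw [hJC] at hdet
  apply mul_left_cancel₀ (show (C J.det : ℂ[X]) ≠ 0 from fun hc => hJ (by simpa using hc))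
  rw [Matrix.charpoly, Matrix.charpoly, hdet, mul_comm]

lemma charpoly_conj (A : Matrix (Fin n) (Fin n) (Quaternion ℝ)) :
    (qiota A).charpoly.map (starRingEnd ℂ) = (qiota A).charpoly := by
  rw [← Matrix.charpoly_map]
  exact charpoly_conj_aux (Jmat n) (qiota A) det_J_ne_zero (J_conj A)

lemma charpoly_sub_smul {m : Type*} [Fintype m] [DecidableEq m] (B : Matrix m m ℂ) (r : ℂ) :
    (B - r • 1).charpoly = B.charpoly.comp (X + C r) := by
  let F : ℂ[X] →+* ℂ[X] := (aeval (X + C r) : ℂ[X] →ₐ[ℂ] ℂ[X]).toRingHom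
  have hmap : (charmatrix B).map F = charmatrix (B - r • 1) := by
    ext i j : 2
    by_cases h : i = j
    · subst h
      simp only [Matrix.map_apply, charmatrix_apply_eq, Matrix.sub_apply, Matrix.smul_apply,
        Matrix.one_apply_eq, F, map_sub, AlgHom.toRingHom_eq_coe, RingHom.coe_coe, aeval_X, aeval_C,
        smul_eq_mul, mul_one]
      rw [Polynomial.algebraMap_eq]; ring
    · simp only [Matrix.map_apply, charmatrix_apply_ne _ _ _ h, Matrix.sub_apply,
        Matrix.smul_apply, Matrix.one_apply_ne h, F, map_neg, AlgHom.toRingHom_eq_coe,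
        RingHom.coe_coe, aeval_C, smul_eq_mul, mul_zero, sub_zero, Polynomial.algebraMap_eq]
  calc (B - r • 1).charpoly = ((charmatrix B).map F).det := by rw [hmap]; rfl
    _ = F (charmatrix B).det := by rw [RingHom.map_det]; rfl
    _ = B.charpoly.comp (X + C r) := by
        rw [Matrix.charpoly, comp_eq_aeval]; rfl

lemma rootMultiplicity_eq_natTrailingDegree (p : ℂ[X]) (hp : p ≠ 0) (r : ℂ) :
    rootMultiplicity r p = (p.comp (X + C r)).natTrailingDegree := by
  obtain ⟨g, hg, hnd⟩ := p.exists_eq_pow_rootMultiplicity_mul_and_not_dvd hp r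
  have hg0 : g.eval r ≠ 0 := fun h => hnd (dvd_iff_isRoot.mpr h)
  have hcomp : p.comp (X + C r) = X ^ (rootMultiplicity r p) * g.comp (X + C r) := by
    conv_lhs => rw [hg]
    rw [mul_comp, pow_comp, sub_comp, X_comp, C_comp, add_sub_cancel_right]
  have hgc0 : (g.comp (X + C r)).coeff 0 ≠ 0 := by
    rw [coeff_zero_eq_eval_zero, eval_comp]
    simpa using hg0
  have hgc : g.comp (X + C r) ≠ 0 := fun h => hgc0 (by simp [h])
  rw [hcomp, natTrailingDegree_mul (pow_ne_zero _ X_ne_zero) hgc, natTrailingDegree_X_pow,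
    Polynomial.natTrailingDegree_eq_zero.mpr (Or.inr hgc0), add_zero]

lemma even_finrank_aux (k : ℕ) :
    ∀ (V : Type) [AddCommGroup V] [Module ℂ V] [FiniteDimensional ℂ V]
      (φ : V → V), (∀ x y, φ (x + y) = φ x + φ y) →
      (∀ (c : ℂ) (x : V), φ (c • x) = (starRingEnd ℂ c) • φ x) →
      (∀ x, φ (φ x) = -x) → Module.finrank ℂ V = k → Even k := by
  induction k using Nat.strong_induction_on with
  | _ k IH =>
  intro V _ _ _ φ hadd hsmul hsq hk
  rcases eq_or_ne k 0 with rfl | hk0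
  · exact Even.zero
  have hpos : 0 < finrank ℂ V := hk ▸ Nat.pos_of_ne_zero hk0
  have : Nontrivial V := Module.nontrivial_of_finrank_pos hpos
  obtain ⟨v, hv⟩ := exists_ne (0 : V)
  have hzero : φ 0 = 0 := by
    have h := hadd 0 0
    rw [add_zero] at h
    exact (add_eq_left.mp h.symm)
  have hneg : ∀ x, φ (-x) = -φ x := by
    intro x
    have h := hadd x (-x)
    rw [add_neg_cancel, hzero] at h
    exact (neg_eq_of_add_eq_zero_right h.symm).symm
  have hsub : ∀ x y, φ (x - y) = φ x - φ y := by
    intro x y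
    rw [sub_eq_add_neg, hadd, hneg, sub_eq_add_neg]
  have hφv : φ v ≠ 0 := by
    intro h
    apply hv
    have := hsq v
    rw [h, hzero] at this
    simpa using this.symm
  -- linear independence of v, φ v
  have hind : LinearIndependent ℂ ![v, φ v] := by
    rw [linearIndependent_fin2]
    refine ⟨by simpa using hφv, fun a ha => ?_⟩
    simp only [Matrix.cons_val_one, Matrix.head_cons, Matrix.cons_val_zero] at ha
    -- ha : a • φ v = v
    apply hφv
    have h1 : φ v = -((starRingEnd ℂ) a • v) := by
      have hh := hsmul a (φ v)
      rw [ha] at hh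
      rw [hh, hsq, smul_neg]
    have h2 : (1 + (starRingEnd ℂ) a * a) • φ v = 0 := by
      rw [add_smul, one_smul, mul_smul, ha, h1]
      simp
    have h3 : (1 + (starRingEnd ℂ) a * a) ≠ 0 := by
      intro hc
      have hre := congrArg Complex.re hc
      simp [Complex.add_re, Complex.mul_re, Complex.conj_re, Complex.conj_im] at hre
      nlinarith [hre]
    exact (smul_eq_zero.mp h2).resolve_left h3
  set W : Submodule ℂ V := Submodule.span ℂ {v, φ v} with hW
  have hWrank : finrank ℂ W = 2 := by
    have hr : Set.range ![v, φ v] = {v, φ v} := by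
      simp only [Matrix.range_cons, Matrix.range_empty, Set.union_empty, Set.union_singleton]
      exact Set.pair_comm _ _
    rw [hW, ← hr, finrank_span_eq_card hind, Fintype.card_fin]
  have hWinv : ∀ x ∈ W, φ x ∈ W := by
    intro x hx
    rw [hW, Submodule.mem_span_pair] at hx ⊢
    obtain ⟨a, b, rfl⟩ := hx
    refine ⟨-((starRingEnd ℂ) b), (starRingEnd ℂ) a, ?_⟩
    rw [hadd, hsmul, hsmul, hsq, neg_smul, smul_neg]
    abel
  have hQrank : finrank ℂ (V ⧸ W) + 2 = k := by
    rw [← hk, ← hWrank]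
    exact Submodule.finrank_quotient_add_finrank W
  -- induced map on quotient
  let ψ : (V ⧸ W) → (V ⧸ W) := fun z =>
    Quotient.liftOn' z (fun x => Submodule.Quotient.mk (φ x)) (by
      intro x y hxy
      have hxy' : x - y ∈ W := (Submodule.quotientRel_def W).mp hxy
      exact (Submodule.Quotient.eq W).mpr (by rw [← hsub]; exact hWinv _ hxy'))
  have hψmk : ∀ x : V, ψ (Submodule.Quotient.mk x) = Submodule.Quotient.mk (φ x) :=
    fun x => rfl
  have hsur := Submodule.Quotient.mk_surjective W
  have h1 : ∀ x y : V ⧸ W, ψ (x + y) = ψ x + ψ y := by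
    intro x y
    obtain ⟨a, rfl⟩ := hsur x; obtain ⟨b, rfl⟩ := hsur y
    rw [← Submodule.Quotient.mk_add, hψmk, hψmk, hψmk, hadd, Submodule.Quotient.mk_add]
  have h2 : ∀ (c : ℂ) (x : V ⧸ W), ψ (c • x) = (starRingEnd ℂ c) • ψ x := by
    intro c x
    obtain ⟨a, rfl⟩ := hsur x
    rw [← Submodule.Quotient.mk_smul, hψmk, hψmk, hsmul, Submodule.Quotient.mk_smul]
  have h3 : ∀ x : V ⧸ W, ψ (ψ x) = -x := by
    intro x
    obtain ⟨a, rfl⟩ := hsur x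
    rw [hψmk, hψmk, hsq, Submodule.Quotient.mk_neg]
  have heven := IH (finrank ℂ (V ⧸ W)) (by omega) (V ⧸ W) ψ h1 h2 h3 rfl
  rw [← hQrank]
  exact heven.add even_two

noncomputable def phi0 (n : ℕ) (x : Fin n ⊕ Fin n → ℂ) : Fin n ⊕ Fin n → ℂ :=
  (Jmat n).mulVec (fun i => (starRingEnd ℂ) (x i))

lemma conj_mulVec {m : Type} [Fintype m] (M : Matrix m m ℂ) (x : m → ℂ) :
    (fun i => (starRingEnd ℂ) ((M.mulVec x) i)) =
      (M.map (starRingEnd ℂ)).mulVec (fun i => (starRingEnd ℂ) (x i)) := by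
  funext i
  simp [Matrix.mulVec, dotProduct, map_sum, Matrix.map_apply]

lemma Jmat_map_conj : (Jmat n).map (starRingEnd ℂ) = Jmat n := by
  ext i j
  cases i <;> cases j <;>
    simp [Jmat, fromBlocks, Matrix.one_apply, Matrix.map_apply, apply_ite (starRingEnd ℂ)]

lemma phi0_add (x y : Fin n ⊕ Fin n → ℂ) : phi0 n (x + y) = phi0 n x + phi0 n y := by
  unfold phi0
  have h : (fun i => (starRingEnd ℂ) ((x + y) i)) =
      (fun i => (starRingEnd ℂ) (x i)) + (fun i => (starRingEnd ℂ) (y i)) := by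
    funext i; simp
  rw [h, Matrix.mulVec_add]

lemma phi0_smul (c : ℂ) (x : Fin n ⊕ Fin n → ℂ) :
    phi0 n (c • x) = (starRingEnd ℂ c) • phi0 n x := by
  unfold phi0
  have h : (fun i => (starRingEnd ℂ) ((c • x) i)) =
      (starRingEnd ℂ c) • (fun i => (starRingEnd ℂ) (x i)) := by
    funext i; simp
  rw [h, Matrix.mulVec_smul]

lemma phi0_sq (x : Fin n ⊕ Fin n → ℂ) : phi0 n (phi0 n x) = -x := by
  unfold phi0
  rw [conj_mulVec, Jmat_map_conj, Matrix.mulVec_mulVec]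
  have h : (fun i => (starRingEnd ℂ) ((fun i => (starRingEnd ℂ) (x i)) i)) = x := by
    funext i; simp
  rw [h, J_mul_J, Matrix.neg_mulVec, Matrix.one_mulVec]

lemma phi0_mulVec (A : Matrix (Fin n) (Fin n) (Quaternion ℝ)) (x : Fin n ⊕ Fin n → ℂ) :
    phi0 n ((qiota A).mulVec x) = (qiota A).mulVec (phi0 n x) := by
  unfold phi0
  rw [conj_mulVec, Matrix.mulVec_mulVec, J_conj A, ← Matrix.mulVec_mulVec]

lemma charpoly_toLin' {m : Type} [Fintype m] [DecidableEq m] (M : Matrix m m ℂ) :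
    LinearMap.charpoly (Matrix.toLin' M) = M.charpoly := by
  rw [← LinearMap.charpoly_toMatrix (Matrix.toLin' M) (Pi.basisFun ℂ m),
    LinearMap.toMatrix_eq_toMatrix', LinearMap.toMatrix'_toLin']

lemma even_rootMultiplicity (A : Matrix (Fin n) (Fin n) (Quaternion ℝ)) (r : ℝ) :
    Even (rootMultiplicity (r : ℂ) (qiota A).charpoly) := by
  classical
  set B := qiota A with hB
  set g : Module.End ℂ (Fin n ⊕ Fin n → ℂ) := Matrix.toLin' B - (r : ℂ) • 1 with hgdef
  have hg : Matrix.toLin' (B - (r : ℂ) • 1) = g := by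
    rw [hgdef, map_sub, _root_.map_smul, Matrix.toLin'_one]; rfl
  have hq0 : B.charpoly ≠ 0 := B.charpoly_monic.ne_zero
  have key : rootMultiplicity (r : ℂ) B.charpoly = finrank ℂ (g.maxGenEigenspace 0) := by
    rw [LinearMap.finrank_maxGenEigenspace_zero_eq g, ← hg, charpoly_toLin', charpoly_sub_smul,
      rootMultiplicity_eq_natTrailingDegree B.charpoly hq0]
  rw [key]
  set V := g.maxGenEigenspace 0 with hV
  -- φ₀ commutes with g
  have hcomm : ∀ x, phi0 n (g x) = g (phi0 n x) := by
    intro x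
    have hgx : ∀ y, g y = B.mulVec y - (r : ℂ) • y := by
      intro y
      rw [hgdef]
      simp [Matrix.toLin'_apply]
    rw [hgx, hgx]
    have hsub : ∀ a b, phi0 n (a - b) = phi0 n a - phi0 n b := by
      intro a b
      have h := phi0_add (a - b) b
      rw [sub_add_cancel] at h
      rw [h]; abel
    rw [hsub, phi0_mulVec, phi0_smul]
    simp [Complex.conj_ofReal, hB]
  have hpow : ∀ (k : ℕ) x, (g ^ k) (phi0 n x) = phi0 n ((g ^ k) x) := by
    intro k
    induction k with
    | zero => intro x; simp
    | succ k ih =>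
      intro x
      rw [pow_succ, Module.End.mul_apply, Module.End.mul_apply, ← hcomm, ih]
  have hmem : ∀ x ∈ V, phi0 n x ∈ V := by
    intro x hx
    rw [hV, Module.End.mem_maxGenEigenspace] at hx ⊢
    obtain ⟨k, hk⟩ := hx
    refine ⟨k, ?_⟩
    simp only [zero_smul, sub_zero] at hk ⊢
    rw [hpow, hk]
    unfold phi0
    have : (fun i => (starRingEnd ℂ) ((0 : Fin n ⊕ Fin n → ℂ) i)) = 0 := by
      funext i; simp
    rw [this, Matrix.mulVec_zero]
  refine even_finrank_aux _ V (fun x => ⟨phi0 n x, hmem _ x.2⟩) ?_ ?_ ?_ rfl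
  · intro x y
    exact Subtype.ext (by simpa using phi0_add x.1 y.1)
  · intro c x
    exact Subtype.ext (by simpa using phi0_smul c x.1)
  · intro x
    exact Subtype.ext (by simpa using phi0_sq x.1)

lemma exists_half (S : Multiset ℂ) (h : ∀ z, Even (S.count z)) :
    ∃ T : Multiset ℂ, T + T = S := by
  classical
  refine ⟨∑ a ∈ S.toFinset, Multiset.replicate (S.count a / 2) a, ?_⟩
  refine Multiset.ext.mpr fun z => ?_
  rw [Multiset.count_add, Multiset.count_sum']
  have hsum : (∑ a ∈ S.toFinset, Multiset.count z (Multiset.replicate (S.count a / 2) a))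
      = if z ∈ S.toFinset then S.count z / 2 else 0 := by
    rw [Finset.sum_congr rfl fun a _ => Multiset.count_replicate z a _]
    exact Finset.sum_ite_eq' S.toFinset z fun a => S.count a / 2
  rw [hsum]
  by_cases hz : z ∈ S.toFinset
  · obtain ⟨m, hm⟩ := h z
    rw [if_pos hz, hm]
    omega
  · have h0 : S.count z = 0 := by
      rw [Multiset.count_eq_zero]
      exact fun hc => hz (Multiset.mem_toFinset.mpr hc)
    rw [if_neg hz, h0]

end
end Stmt8Aux

open Stmt8Aux in
/-- The characteristic polynomial of `ι(A)` factors as `P · conj P` with `P` monic of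
degree `n`; in particular every real eigenvalue of `ι(A)` has even multiplicity. -/
theorem stmt8 {n : ℕ} (A : Matrix (Fin n) (Fin n) (Quaternion ℝ)) :
    ∃ P : Polynomial ℂ, P.Monic ∧ P.natDegree = n ∧
      (qiota A).charpoly = P * P.map (starRingEnd ℂ) ∧
      ∀ r : ℝ, Even (Polynomial.rootMultiplicity (r : ℂ) (qiota A).charpoly) := by

  classical
  set q := (qiota A).charpoly with hq
  have hmon : q.Monic := Matrix.charpoly_monic _
  have hq0 : q ≠ 0 := hmon.ne_zero
  have hsplits : q.Splits := IsAlgClosed.splits q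
  have hdeg : q.natDegree = n + n := by
    rw [hq, Matrix.charpoly_natDegree_eq_dim]
    simp [Fintype.card_sum]
  set R := q.roots with hR
  have hcard : Multiset.card R = n + n := by
    rw [hR, Polynomial.splits_iff_card_roots.mp hsplits, hdeg]
  have hmapRoots : R.map (starRingEnd ℂ) = R := by
    have h1 := hsplits.roots_map (starRingEnd ℂ)
    rw [show q.map (starRingEnd ℂ) = q from charpoly_conj A] at h1
    exact h1.symm
  have hstar : ∀ z : ℂ, R.count z = R.count ((starRingEnd ℂ) z) := by
    intro z
    have h1 := Multiset.count_map_eq_count' (starRingEnd ℂ) R (starRingEnd ℂ).injective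
      ((starRingEnd ℂ) z)
    simp only [Complex.conj_conj] at h1
    conv_lhs => rw [← hmapRoots]
    exact h1
  have heven : ∀ z : ℂ, z.im = 0 → Even (R.count z) := by
    intro z hz
    have hzr : z = ((z.re : ℝ) : ℂ) := Complex.ext rfl (by simp [hz])
    rw [hR, Polynomial.count_roots, hq, hzr]
    exact even_rootMultiplicity A z.re
  set Rp := R.filter (fun z => 0 < z.im) with hRp
  set R0 := R.filter (fun z => z.im = 0) with hR0
  set Rm := R.filter (fun z => z.im < 0) with hRm
  have hpart : R = Rp + R0 + Rm := by
    refine Multiset.ext.mpr fun z => ?_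
    rw [Multiset.count_add, Multiset.count_add, hRp, hR0, hRm, Multiset.count_filter,
      Multiset.count_filter, Multiset.count_filter]
    rcases lt_trichotomy z.im 0 with h | h | h
    · rw [if_neg (by linarith), if_neg (by linarith), if_pos h]; omega
    · rw [if_neg (by simp [h]), if_pos h, if_neg (by simp [h])]; omega
    · rw [if_pos h, if_neg (by linarith), if_neg (by linarith)]; omega
  have hmirror : Rp.map (starRingEnd ℂ) = Rm := by
    refine Multiset.ext.mpr fun z => ?_
    have h1 := Multiset.count_map_eq_count' (starRingEnd ℂ) Rp (starRingEnd ℂ).injective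
      ((starRingEnd ℂ) z)
    simp only [Complex.conj_conj] at h1
    rw [h1, hRp, hRm, Multiset.count_filter, Multiset.count_filter]
    by_cases hz : z.im < 0
    · rw [if_pos (by simp [Complex.conj_im]; linarith), if_pos hz]
      exact (hstar z).symm
    · rw [if_neg (by simp [Complex.conj_im]; linarith), if_neg hz]
  obtain ⟨T, hT⟩ := exists_half R0 (by
    intro z
    rw [hR0, Multiset.count_filter]
    by_cases hz : z.im = 0
    · rw [if_pos hz]; exact heven z hz
    · rw [if_neg hz]; exact Even.zero)
  have hTcount0 : ∀ w : ℂ, w.im ≠ 0 → T.count w = 0 := by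
    intro w hw
    have h0 : R0.count w = 0 := by rw [hR0, Multiset.count_filter, if_neg hw]
    have h2 : T.count w + T.count w = R0.count w := by rw [← hT, Multiset.count_add]
    omega
  have hTreal : T.map (starRingEnd ℂ) = T := by
    refine Multiset.ext.mpr fun z => ?_
    have h1 := Multiset.count_map_eq_count' (starRingEnd ℂ) T (starRingEnd ℂ).injective
      ((starRingEnd ℂ) z)
    simp only [Complex.conj_conj] at h1
    rw [h1]
    by_cases hz : z.im = 0
    · rw [Complex.conj_eq_iff_im.mpr hz]
    · have hz' : ((starRingEnd ℂ) z).im ≠ 0 := by simp [Complex.conj_im, hz]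
      rw [hTcount0 _ hz', hTcount0 _ hz]
  set P := ((Rp + T).map (fun z => X - C z)).prod with hP
  have hPmonic : P.Monic :=
    monic_multiset_prod_of_monic _ _ (fun z _ => monic_X_sub_C z)
  have hcardPT : Multiset.card (Rp + T) = n := by
    have hc1 : Multiset.card Rm = Multiset.card Rp := by
      rw [← hmirror, Multiset.card_map]
    have hc2 : Multiset.card R0 = Multiset.card T + Multiset.card T := by
      rw [← hT, Multiset.card_add]
    have hc3 := congrArg Multiset.card hpart
    rw [hcard, Multiset.card_add, Multiset.card_add] at hc3
    rw [Multiset.card_add]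
    omega
  have hPdeg : P.natDegree = n := by
    rw [hP, natDegree_multiset_prod_of_monic _ (by
      intro f hf
      obtain ⟨z, _, rfl⟩ := Multiset.mem_map.mp hf
      exact monic_X_sub_C z), Multiset.map_map]
    have hconst : ((Rp + T).map (natDegree ∘ fun z => X - C z))
        = (Rp + T).map (fun _ => 1) :=
      Multiset.map_congr rfl fun z _ => by simp [natDegree_X_sub_C]
    rw [hconst, Multiset.map_const', Multiset.sum_replicate, smul_eq_mul, mul_one, hcardPT]
  have hPconj : P.map (starRingEnd ℂ)
      = (((Rp + T).map (starRingEnd ℂ)).map (fun z => X - C z)).prod := by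
    rw [hP, ← Polynomial.coe_mapRingHom, map_multiset_prod, Multiset.map_map, Multiset.map_map]
    exact congrArg _ (Multiset.map_congr rfl fun z _ => by simp)
  have hmulti : (Rp + T) + ((Rp + T).map (starRingEnd ℂ)) = R := by
    rw [Multiset.map_add, hmirror, hTreal, hpart, ← hT]
    abel
  have hfactor : q = P * P.map (starRingEnd ℂ) := by
    rw [hPconj, hP, ← Multiset.prod_add, ← Multiset.map_add, hmulti]
    exact hsplits.eq_prod_roots_of_monic hmon
  exact ⟨P, hPmonic, hPdeg, hfactor, fun r => even_rootMultiplicity A r⟩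
end

section
/- Let A be an n×n complex matrix with all eigenvalues nonzero, eigenvalues π₁,...,πₙ ordered by decreasing modulus. For i = 2, ..., n−1 and each m, the i-th singular value of Aᵐ satisfies: limsup_{m→∞} σᵢ(Aᵐ)^{1/m} ≤ |πᵢ| and liminf_{m→∞} σᵢ(Aᵐ)^{1/m} ≥ |πᵢ|, given that the corresponding statements hold for the two principal submatrices of the Schur triangularization of A obtained by deleting the first row/column and the last row/column respectively. -/
open Matrix Polynomial Filter

/-- `σ` lists the singular values of `A` in decreasing order (with multiplicity). -/
def IsSingularValues {n : ℕ} (A : Matrix (Fin n) (Fin n) ℂ) (σ : Fin n → ℝ) : Prop :=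
  Antitone σ ∧ (∀ i, 0 ≤ σ i) ∧
    (Aᴴ * A).charpoly = ∏ i : Fin n, (X - C ((σ i : ℂ) ^ 2))


section structural
variable {N : ℕ}

lemma myPowTriangular (T : Matrix (Fin N) (Fin N) ℂ) (hT : T.BlockTriangular id) (m : ℕ) :
    (T ^ m).BlockTriangular id := by
  induction m with
  | zero => simpa using blockTriangular_one
  | succ m ih => rw [pow_succ]; exact ih.mul hT

lemma mySubPowSucc (T : Matrix (Fin (N + 1)) (Fin (N + 1)) ℂ) (hT : T.BlockTriangular id) (m : ℕ) :
    (T ^ m).submatrix Fin.succ Fin.succ = (T.submatrix Fin.succ Fin.succ) ^ m := by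
  induction m with
  | zero =>
    simp [pow_zero, submatrix_one _ (Fin.succ_injective _)]
  | succ m ih =>
    rw [pow_succ, pow_succ, ← ih]
    ext i j
    simp only [submatrix_apply, mul_apply, Fin.sum_univ_succ]
    have h0 : (T ^ m) i.succ 0 = 0 := myPowTriangular T hT m (Fin.succ_pos i)
    rw [h0]
    simp

lemma mySubPowCast (T : Matrix (Fin (N + 1)) (Fin (N + 1)) ℂ) (hT : T.BlockTriangular id) (m : ℕ) :
    (T ^ m).submatrix Fin.castSucc Fin.castSucc = (T.submatrix Fin.castSucc Fin.castSucc) ^ m := by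
  induction m with
  | zero =>
    simp [pow_zero, submatrix_one _ (Fin.castSucc_injective _)]
  | succ m ih =>
    rw [pow_succ, pow_succ, ← ih]
    ext i j
    simp only [submatrix_apply, mul_apply, Fin.sum_univ_castSucc]
    have h0 : T (Fin.last N) j.castSucc = 0 := hT (Fin.castSucc_lt_last j)
    rw [h0]
    simp

lemma mySubMulCT (M : Matrix (Fin (N + 1)) (Fin (N + 1)) ℂ) (hM : M.BlockTriangular id) :
    (M * Mᴴ).submatrix Fin.succ Fin.succ =
      (M.submatrix Fin.succ Fin.succ) * (M.submatrix Fin.succ Fin.succ)ᴴ := by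
  ext i j
  simp only [submatrix_apply, mul_apply, conjTranspose_apply, Fin.sum_univ_succ]
  have h0 : M i.succ 0 = 0 := hM (Fin.succ_pos i)
  rw [h0]
  simp

lemma myCTMulSub (M : Matrix (Fin (N + 1)) (Fin (N + 1)) ℂ) (hM : M.BlockTriangular id) :
    (Mᴴ * M).submatrix Fin.castSucc Fin.castSucc =
      (M.submatrix Fin.castSucc Fin.castSucc)ᴴ * (M.submatrix Fin.castSucc Fin.castSucc) := by
  ext i j
  simp only [submatrix_apply, mul_apply, conjTranspose_apply, Fin.sum_univ_castSucc]
  have h0 : M (Fin.last N) i.castSucc = 0 := hM (Fin.castSucc_lt_last i)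
  rw [h0]
  simp

end structural

lemma myCharpolyConj {N : ℕ} (P Q B : Matrix (Fin N) (Fin N) ℂ) (hPQ : P * Q = 1) :
    (P * B * Q).charpoly = B.charpoly := by
  have h1 : charmatrix (P * B * Q) =
      (C : ℂ →+* ℂ[X]).mapMatrix P * charmatrix B * (C : ℂ →+* ℂ[X]).mapMatrix Q := by
    unfold charmatrix
    rw [mul_sub, sub_mul]
    congr 1
    · rw [mul_assoc, scalar_commute (X : ℂ[X]) (fun r' => Commute.all _ _), ← mul_assoc,
        ← _root_.map_mul, hPQ, _root_.map_one, one_mul]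
    · rw [← _root_.map_mul, ← _root_.map_mul]
  have h2 : (C : ℂ →+* ℂ[X]).mapMatrix Q * (C : ℂ →+* ℂ[X]).mapMatrix P = 1 := by
    rw [← _root_.map_mul, mul_eq_one_comm.mp hPQ, _root_.map_one]
  show det _ = det _
  rw [h1, det_mul, det_mul, mul_comm, ← mul_assoc, ← det_mul, h2, det_one, one_mul]

lemma myOfFnMultiset {N : ℕ} {α : Type*} (f : Fin N → α) :
    (↑(List.ofFn f) : Multiset α) = Multiset.map f Finset.univ.val := by
  rw [List.ofFn_eq_map]
  rfl

lemma myMapPerm {N : ℕ} {α : Type*} (f : Fin N → α) (e : Equiv.Perm (Fin N)) :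
    Multiset.map (f ∘ e) Finset.univ.val = Multiset.map f Finset.univ.val := by
  rw [← Multiset.map_map]
  congr 1
  have : (Finset.univ.map e.toEmbedding) = Finset.univ := Finset.map_univ_equiv e
  calc Multiset.map (⇑e) Finset.univ.val = (Finset.univ.map e.toEmbedding).val := rfl
    _ = Finset.univ.val := by rw [this]

lemma myExistsPerm {N : ℕ} (f g : Fin N → ℝ)
    (h : Multiset.map f Finset.univ.val = Multiset.map g Finset.univ.val) :
    ∃ e : Equiv.Perm (Fin N), f ∘ e = g := by
  set sf := Tuple.sort f
  set sg := Tuple.sort g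
  have hmf : Monotone (f ∘ sf) := Tuple.monotone_sort f
  have hmg : Monotone (g ∘ sg) := Tuple.monotone_sort g
  have hms : (↑(List.ofFn (f ∘ sf)) : Multiset ℝ) = ↑(List.ofFn (g ∘ sg)) := by
    rw [myOfFnMultiset, myOfFnMultiset, myMapPerm, myMapPerm, h]
  have hperm : (List.ofFn (f ∘ sf)).Perm (List.ofFn (g ∘ sg)) := Multiset.coe_eq_coe.mp hms
  have heq : List.ofFn (f ∘ sf) = List.ofFn (g ∘ sg) :=
    hperm.eq_of_sortedLE (hmf.sortedLE_ofFn) (hmg.sortedLE_ofFn)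
  have heq2 : f ∘ sf = g ∘ sg := List.ofFn_injective heq
  refine ⟨sg.symm.trans sf, ?_⟩
  funext x
  have := congrFun heq2 (sg.symm x)
  simpa using this
lemma myCharpolyEig {N : ℕ} (H : Matrix (Fin N) (Fin N) ℂ) (hH : H.IsHermitian) :
    H.charpoly = ∏ i, (X - C ((hH.eigenvalues i : ℝ) : ℂ)) := by
  have hV : (hH.eigenvectorUnitary : Matrix (Fin N) (Fin N) ℂ) *
      star (hH.eigenvectorUnitary : Matrix (Fin N) (Fin N) ℂ) = 1 :=
    (Matrix.mem_unitaryGroup_iff).mp hH.eigenvectorUnitary.2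
  calc H.charpoly
      = ((hH.eigenvectorUnitary : Matrix (Fin N) (Fin N) ℂ) *
          diagonal (RCLike.ofReal ∘ hH.eigenvalues) *
          star (hH.eigenvectorUnitary : Matrix (Fin N) (Fin N) ℂ)).charpoly := by
        conv_lhs => rw [hH.spectral_theorem]
        rfl
    _ = (diagonal (RCLike.ofReal ∘ hH.eigenvalues) : Matrix (Fin N) (Fin N) ℂ).charpoly :=
        myCharpolyConj _ _ _ hV
    _ = ∏ i, (X - C ((hH.eigenvalues i : ℝ) : ℂ)) := by
        rw [charpoly_of_upperTriangular _ (blockTriangular_diagonal _)]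
        simp

lemma myMultisetOfCharpoly {N : ℕ} (a b : Fin N → ℝ)
    (h : (∏ i, (X - C ((a i : ℝ) : ℂ))) = ∏ i, (X - C ((b i : ℝ) : ℂ))) :
    Multiset.map a Finset.univ.val = Multiset.map b Finset.univ.val := by
  have key : ∀ c : Fin N → ℝ, (∏ i, (X - C ((c i : ℝ) : ℂ))).roots
      = Multiset.map (fun i => ((c i : ℝ) : ℂ)) Finset.univ.val := by
    intro c
    have : (∏ i, (X - C ((c i : ℝ) : ℂ)))
        = ((Multiset.map (fun i => ((c i : ℝ) : ℂ)) Finset.univ.val).map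
            fun z => X - C z).prod := by
      rw [Multiset.map_map]
      rfl
    rw [this, roots_multiset_prod_X_sub_C]
  have h2 : Multiset.map (fun i => ((a i : ℝ) : ℂ)) Finset.univ.val
      = Multiset.map (fun i => ((b i : ℝ) : ℂ)) Finset.univ.val := by
    rw [← key a, ← key b, h]
  have h3 := congrArg (Multiset.map Complex.re) h2
  simpa [Multiset.map_map, Function.comp_def] using h3

lemma myEigenbasis {N : ℕ} (H : Matrix (Fin N) (Fin N) ℂ) (hH : H.IsHermitian)
    (a : Fin N → ℝ) (hchar : H.charpoly = ∏ i, (X - C ((a i : ℝ) : ℂ))) :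
    ∃ u : Fin N → (Fin N → ℂ),
      (∀ i j, star (u i) ⬝ᵥ u j = if i = j then 1 else 0) ∧
      ∀ j, H *ᵥ u j = ((a j : ℝ) : ℂ) • u j := by
  obtain ⟨e, he⟩ := myExistsPerm a hH.eigenvalues
    (myMultisetOfCharpoly a hH.eigenvalues (hchar.symm.trans (myCharpolyEig H hH)))
  refine ⟨fun j => ⇑(hH.eigenvectorBasis (e.symm j)), ?_, ?_⟩
  · intro i j
    have := (orthonormal_iff_ite.mp hH.eigenvectorBasis.orthonormal) (e.symm i) (e.symm j)
    rw [EuclideanSpace.inner_eq_star_dotProduct, dotProduct_comm] at this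
    simpa [Equiv.symm_apply_eq] using this
  · intro j
    have h1 := hH.mulVec_eigenvectorBasis (e.symm j)
    have h2 : hH.eigenvalues (e.symm j) = a j := by
      have := congrFun he (e.symm j); simpa using this.symm
    rw [h2] at h1
    rw [h1]
    funext x
    simp [Complex.real_smul]

lemma mySumDot {ι N : Type*} [Fintype N] (s : Finset ι) (f : ι → N → ℂ) (w : N → ℂ) :
    (∑ i ∈ s, f i) ⬝ᵥ w = ∑ i ∈ s, (f i ⬝ᵥ w) := by
  simp only [dotProduct, Finset.sum_apply, Finset.sum_mul]
  exact Finset.sum_comm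

lemma myDotSum {ι N : Type*} [Fintype N] (s : Finset ι) (f : ι → N → ℂ) (w : N → ℂ) :
    w ⬝ᵥ (∑ i ∈ s, f i) = ∑ i ∈ s, (w ⬝ᵥ f i) := by
  simp only [dotProduct, Finset.sum_apply, Finset.mul_sum]
  exact Finset.sum_comm

lemma myQuadEval {N r : ℕ} (H : Matrix (Fin N) (Fin N) ℂ) (v : Fin r → (Fin N → ℂ))
    (hon : ∀ i j, star (v i) ⬝ᵥ v j = if i = j then 1 else 0)
    (μ : Fin r → ℝ) (hv : ∀ j, H *ᵥ v j = ((μ j : ℝ) : ℂ) • v j) (c : Fin r → ℂ) :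
    star (∑ j, c j • v j) ⬝ᵥ (H *ᵥ ∑ j, c j • v j)
      = ((∑ j, μ j * Complex.normSq (c j) : ℝ) : ℂ) := by
  have hmv : H *ᵥ (∑ j, c j • v j) = ∑ j, (c j * (μ j : ℂ)) • v j := by
    rw [show H *ᵥ (∑ j, c j • v j) = H.mulVecLin (∑ j, c j • v j) from rfl, map_sum]
    refine Finset.sum_congr rfl fun j _ => ?_
    rw [_root_.map_smul, show H.mulVecLin (v j) = H *ᵥ v j from rfl, hv j, smul_smul]
  rw [hmv, star_sum, mySumDot]
  have hterm : ∀ i : Fin r, star (c i • v i) ⬝ᵥ (∑ j, (c j * (μ j : ℂ)) • v j)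
      = (starRingEnd ℂ) (c i) * (c i * (μ i : ℂ)) := by
    intro i
    rw [myDotSum]
    have : ∀ j : Fin r, star (c i • v i) ⬝ᵥ ((c j * (μ j : ℂ)) • v j)
        = (starRingEnd ℂ) (c i) * (c j * (μ j : ℂ)) * (if i = j then 1 else 0) := by
      intro j
      rw [star_smul, smul_dotProduct, dotProduct_smul, hon i j]
      simp only [smul_eq_mul, Complex.star_def]
      ring
    simp only [this]
    simp
  simp only [hterm]
  push_cast
  refine Finset.sum_congr rfl fun i _ => ?_
  rw [show ((Complex.normSq (c i) : ℝ) : ℂ) = (starRingEnd ℂ) (c i) * c i by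
    rw [Complex.normSq_eq_conj_mul_self]]
  ring

lemma myNormEval {N r : ℕ} (v : Fin r → (Fin N → ℂ))
    (hon : ∀ i j, star (v i) ⬝ᵥ v j = if i = j then 1 else 0) (c : Fin r → ℂ) :
    star (∑ j, c j • v j) ⬝ᵥ (∑ j, c j • v j) = ((∑ j, Complex.normSq (c j) : ℝ) : ℂ) := by
  have := myQuadEval (1 : Matrix (Fin N) (Fin N) ℂ) v hon (fun _ => (1 : ℝ))
    (fun j => by simp) c
  simpa using this

lemma myLinIndep {N r : ℕ} (v : Fin r → (Fin N → ℂ))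
    (hon : ∀ i j, star (v i) ⬝ᵥ v j = if i = j then 1 else 0) :
    LinearIndependent ℂ v := by
  rw [Fintype.linearIndependent_iff]
  intro g hg i
  have h := congrArg (fun w => star (v i) ⬝ᵥ w) hg
  simp only [myDotSum, dotProduct_smul, hon] at h
  simpa using h

lemma myFinrankSpan {N r : ℕ} (v : Fin r → (Fin N → ℂ))
    (hon : ∀ i j, star (v i) ⬝ᵥ v j = if i = j then 1 else 0) :
    Module.finrank ℂ (Submodule.span ℂ (Set.range v)) = r := by
  rw [finrank_span_eq_card (myLinIndep v hon), Fintype.card_fin]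

lemma myDotSelfPos {N : ℕ} (x : Fin N → ℂ) (hx : x ≠ 0) {r : ℝ}
    (hr : star x ⬝ᵥ x = (r : ℂ)) : 0 < r := by
  have h1 : star x ⬝ᵥ x = ((∑ i, Complex.normSq (x i) : ℝ) : ℂ) := by
    simp only [dotProduct, Pi.star_apply]
    push_cast
    refine Finset.sum_congr rfl fun i _ => ?_
    rw [Complex.normSq_eq_conj_mul_self]
    rfl
  have hr2 : r = ∑ i, Complex.normSq (x i) := by
    have := hr.symm.trans h1
    exact_mod_cast this
  rw [hr2]
  obtain ⟨i, hi⟩ : ∃ i, x i ≠ 0 := by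
    by_contra h
    push_neg at h
    exact hx (funext h)
  exact Finset.sum_pos' (fun j _ => Complex.normSq_nonneg _)
    ⟨i, Finset.mem_univ i, by simpa [Complex.normSq_pos] using hi⟩

lemma myIntersect {N : ℕ} (V W : Submodule ℂ (Fin N → ℂ))
    (hdim : N < Module.finrank ℂ V + Module.finrank ℂ W) :
    ∃ x : Fin N → ℂ, x ≠ 0 ∧ x ∈ V ∧ x ∈ W := by
  have h1 := Submodule.finrank_sup_add_finrank_inf_eq V W
  have h2 : Module.finrank ℂ ↥(V ⊔ W) ≤ N := by
    have := Submodule.finrank_le (V ⊔ W)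
    simpa [Module.finrank_pi] using this
  have h3 : 0 < Module.finrank ℂ ↥(V ⊓ W) := by omega
  have h4 : V ⊓ W ≠ ⊥ := by
    intro h
    rw [h] at h3
    simp at h3
  obtain ⟨x, hx, hxne⟩ := Submodule.exists_mem_ne_zero_of_ne_bot h4
  exact ⟨x, hxne, hx.1, hx.2⟩

lemma myCore {N : ℕ} (H : Matrix (Fin N) (Fin N) ℂ)
    (V W : Submodule ℂ (Fin N → ℂ)) (t t' : ℝ)
    (hdim : N < Module.finrank ℂ V + Module.finrank ℂ W)
    (hV : ∀ x ∈ V, ∃ r s : ℝ, star x ⬝ᵥ x = (r : ℂ) ∧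
      star x ⬝ᵥ (H *ᵥ x) = (s : ℂ) ∧ t * r ≤ s)
    (hW : ∀ x ∈ W, ∃ r s : ℝ, star x ⬝ᵥ x = (r : ℂ) ∧
      star x ⬝ᵥ (H *ᵥ x) = (s : ℂ) ∧ s ≤ t' * r) :
    t ≤ t' := by
  obtain ⟨x, hxne, hxV, hxW⟩ := myIntersect V W hdim
  obtain ⟨r, s, hr, hs, hts⟩ := hV x hxV
  obtain ⟨r', s', hr', hs', hts'⟩ := hW x hxW
  have hrr : r = r' := by exact_mod_cast hr.symm.trans hr'
  have hss : s = s' := by exact_mod_cast hs.symm.trans hs'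
  have hrpos := myDotSelfPos x hxne hr
  subst hrr hss
  have h5 : t * r ≤ t' * r := le_trans hts hts'
  exact le_of_mul_le_mul_right h5 hrpos

lemma myEmbDot {n : ℕ} (f : Fin n → Fin (n + 1)) (y : Fin n → ℂ) (w : Fin (n + 1) → ℂ) :
    star ((Matrix.of fun i j => if f j = i then (1 : ℂ) else 0) *ᵥ y) ⬝ᵥ w
      = ∑ j, (starRingEnd ℂ) (y j) * w (f j) := by
  have step1 : star ((Matrix.of fun i j => if f j = i then (1 : ℂ) else 0) *ᵥ y) ⬝ᵥ w
      = ∑ i, ∑ j, (if f j = i then (starRingEnd ℂ) (y j) * w i else 0) := by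
    simp only [dotProduct, mulVec, Pi.star_apply, Matrix.of_apply]
    refine Finset.sum_congr rfl fun i _ => ?_
    have : star (∑ x : Fin n, (if f x = i then (1:ℂ) else 0) * y x)
        = ∑ j, (if f j = i then (starRingEnd ℂ) (y j) else 0) := by
      rw [star_sum]
      refine Finset.sum_congr rfl fun j _ => ?_
      split <;> simp [Complex.star_def]
    rw [this, Finset.sum_mul]
    refine Finset.sum_congr rfl fun j _ => ?_
    split <;> simp
  rw [step1, Finset.sum_comm]
  refine Finset.sum_congr rfl fun j _ => ?_
  rw [Finset.sum_ite_eq]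
  simp

lemma myEmbDotEmb {n : ℕ} {f : Fin n → Fin (n + 1)} (hf : Function.Injective f)
    (y z : Fin n → ℂ) :
    star ((Matrix.of fun i j => if f j = i then (1 : ℂ) else 0) *ᵥ y) ⬝ᵥ
      ((Matrix.of fun i j => if f j = i then (1 : ℂ) else 0) *ᵥ z) = star y ⬝ᵥ z := by
  rw [myEmbDot]
  simp only [dotProduct, Pi.star_apply, mulVec, Matrix.of_apply]
  refine Finset.sum_congr rfl fun j _ => ?_
  congr 1
  simp [hf.eq_iff]

lemma myEmbDotMul {n : ℕ} {f : Fin n → Fin (n + 1)} (hf : Function.Injective f)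
    (M : Matrix (Fin (n + 1)) (Fin (n + 1)) ℂ) (y z : Fin n → ℂ) :
    star ((Matrix.of fun i j => if f j = i then (1 : ℂ) else 0) *ᵥ y) ⬝ᵥ
      (M *ᵥ ((Matrix.of fun i j => if f j = i then (1 : ℂ) else 0) *ᵥ z))
      = star y ⬝ᵥ (M.submatrix f f *ᵥ z) := by
  rw [myEmbDot]
  simp only [dotProduct, Pi.star_apply, mulVec, Matrix.of_apply, submatrix_apply]
  refine Finset.sum_congr rfl fun j _ => ?_
  congr 1
  have : ∀ x : Fin (n+1), M (f j) x * ∑ k : Fin n, (if f k = x then (1:ℂ) else 0) * z k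
      = ∑ k : Fin n, (if f k = x then M (f j) x * z k else 0) := by
    intro x
    rw [Finset.mul_sum]
    refine Finset.sum_congr rfl fun k _ => ?_
    split <;> simp
  simp only [this]
  rw [Finset.sum_comm]
  refine Finset.sum_congr rfl fun k _ => ?_
  rw [Finset.sum_ite_eq]
  simp

lemma myInterlace {n : ℕ} (H : Matrix (Fin (n + 1)) (Fin (n + 1)) ℂ)
    (f : Fin n → Fin (n + 1)) (hf : Function.Injective f)
    (a : Fin (n + 1) → ℝ) (ha : Antitone a) (b : Fin n → ℝ)
    (u : Fin (n + 1) → (Fin (n + 1) → ℂ))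
    (huon : ∀ i j, star (u i) ⬝ᵥ u j = if i = j then 1 else 0)
    (hu : ∀ j, H *ᵥ u j = ((a j : ℝ) : ℂ) • u j)
    (w : Fin n → (Fin n → ℂ))
    (hwon : ∀ i j, star (w i) ⬝ᵥ w j = if i = j then 1 else 0)
    (hb : Antitone b)
    (hw : ∀ j, (H.submatrix f f) *ᵥ w j = ((b j : ℝ) : ℂ) • w j)
    (k : Fin n) : b k ≤ a (Fin.castSucc k) := by
  set P : Matrix (Fin (n + 1)) (Fin n) ℂ :=
    Matrix.of fun i j => if f j = i then (1 : ℂ) else 0 with hP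
  set K : ℕ := (k : ℕ) with hK
  have hKn : K < n := k.isLt
  -- the embedded low family
  set e₁ : Fin (K + 1) → Fin n := fun j => Fin.castLE (by omega) j with he₁
  have he₁inj : Function.Injective e₁ := fun x y hxy => by
    have h' : (e₁ x : ℕ) = (e₁ y : ℕ) := congrArg Fin.val hxy
    simp only [he₁, Fin.coe_castLE] at h'
    exact Fin.val_injective h'
  set v₁ : Fin (K + 1) → (Fin (n + 1) → ℂ) := fun j => P *ᵥ w (e₁ j) with hv₁
  have hv₁on : ∀ i j, star (v₁ i) ⬝ᵥ v₁ j = if i = j then 1 else 0 := by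
    intro i j
    rw [hv₁]
    simp only
    rw [myEmbDotEmb hf, hwon]
    simp [he₁inj.eq_iff]
  -- the high family
  set e₂ : Fin (n + 1 - K) → Fin (n + 1) := fun j => ⟨K + (j : ℕ), by omega⟩ with he₂
  have he₂inj : Function.Injective e₂ := by
    intro x y hxy
    apply Fin.val_injective
    have := congrArg Fin.val hxy
    simpa [he₂] using this
  set v₂ : Fin (n + 1 - K) → (Fin (n + 1) → ℂ) := fun j => u (e₂ j) with hv₂
  have hv₂on : ∀ i j, star (v₂ i) ⬝ᵥ v₂ j = if i = j then 1 else 0 := by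
    intro i j
    rw [hv₂]
    simp only [huon]
    simp [he₂inj.eq_iff]
  set V := Submodule.span ℂ (Set.range v₁) with hV
  set W := Submodule.span ℂ (Set.range v₂) with hW
  refine myCore H V W (b k) (a (Fin.castSucc k)) ?_ ?_ ?_
  · rw [myFinrankSpan v₁ hv₁on, myFinrankSpan v₂ hv₂on]
    omega
  · -- lower bound on V
    intro x hx
    obtain ⟨c, hc⟩ := (Submodule.mem_span_range_iff_exists_fun ℂ).mp hx
    set y : Fin n → ℂ := ∑ j, c j • w (e₁ j) with hy
    have hxy : x = P *ᵥ y := by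
      rw [← hc, hy]
      rw [show P *ᵥ (∑ j, c j • w (e₁ j)) = P.mulVecLin (∑ j, c j • w (e₁ j)) from rfl,
        map_sum]
      refine Finset.sum_congr rfl fun j _ => ?_
      rw [_root_.map_smul]
      rfl
    refine ⟨∑ j, Complex.normSq (c j), ∑ j, b (e₁ j) * Complex.normSq (c j), ?_, ?_, ?_⟩
    · rw [hxy, myEmbDotEmb hf, hy, myNormEval (fun j => w (e₁ j))
        (fun i j => by rw [hwon]; simp [he₁inj.eq_iff]) c]
    · rw [hxy, myEmbDotMul hf, hy, myQuadEval (H.submatrix f f) (fun j => w (e₁ j))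
        (fun i j => by rw [hwon]; simp [he₁inj.eq_iff]) (fun j => b (e₁ j))
        (fun j => hw (e₁ j)) c]
    · rw [Finset.mul_sum]
      refine Finset.sum_le_sum fun j _ => ?_
      refine mul_le_mul_of_nonneg_right ?_ (Complex.normSq_nonneg _)
      refine hb ?_
      show (e₁ j : ℕ) ≤ (k : ℕ)
      have := j.isLt
      simp only [he₁, Fin.coe_castLE]
      omega
  · -- upper bound on W
    intro x hx
    obtain ⟨c, hc⟩ := (Submodule.mem_span_range_iff_exists_fun ℂ).mp hx
    refine ⟨∑ j, Complex.normSq (c j), ∑ j, a (e₂ j) * Complex.normSq (c j), ?_, ?_, ?_⟩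
    · rw [← hc, myNormEval v₂ hv₂on c]
    · rw [← hc, myQuadEval H v₂ hv₂on (fun j => a (e₂ j)) (fun j => hu (e₂ j)) c]
    · rw [Finset.mul_sum]
      refine Finset.sum_le_sum fun j _ => ?_
      refine mul_le_mul_of_nonneg_right ?_ (Complex.normSq_nonneg _)
      refine ha ?_
      show (Fin.castSucc k : ℕ) ≤ (e₂ j : ℕ)
      simp only [he₂, Fin.coe_castSucc]
      omega

lemma myInterlace2 {n : ℕ} (H : Matrix (Fin (n + 1)) (Fin (n + 1)) ℂ)
    (f : Fin n → Fin (n + 1)) (hf : Function.Injective f)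
    (a : Fin (n + 1) → ℝ) (ha : Antitone a) (b : Fin n → ℝ)
    (u : Fin (n + 1) → (Fin (n + 1) → ℂ))
    (huon : ∀ i j, star (u i) ⬝ᵥ u j = if i = j then 1 else 0)
    (hu : ∀ j, H *ᵥ u j = ((a j : ℝ) : ℂ) • u j)
    (w : Fin n → (Fin n → ℂ))
    (hwon : ∀ i j, star (w i) ⬝ᵥ w j = if i = j then 1 else 0)
    (hb : Antitone b)
    (hw : ∀ j, (H.submatrix f f) *ᵥ w j = ((b j : ℝ) : ℂ) • w j)
    (k : Fin n) : a (Fin.succ k) ≤ b k := by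
  have key := myInterlace (-H) f hf (fun j => -a j.rev)
    (fun x y hxy => by simp only [neg_le_neg_iff]; exact ha (Fin.rev_le_rev.mpr hxy))
    (fun j => -b j.rev) (fun j => u j.rev)
    (fun i j => by rw [huon]; simp [Fin.rev_inj])
    (fun j => by rw [neg_mulVec, hu j.rev]; push_cast; rw [neg_smul])
    (fun j => w j.rev)
    (fun i j => by rw [hwon]; simp [Fin.rev_inj])
    (fun x y hxy => by simp only [neg_le_neg_iff]; exact hb (Fin.rev_le_rev.mpr hxy))
    (fun j => by
      have hns : (-H).submatrix f f = -(H.submatrix f f) := rfl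
      rw [hns, Matrix.neg_mulVec, hw j.rev]; push_cast; rw [neg_smul])
    k.rev
  simp only [Fin.rev_rev] at key
  rw [show (Fin.castSucc k.rev).rev = Fin.succ k by rw [Fin.rev_castSucc, Fin.rev_rev]] at key
  linarith

-- helper: rewrite IsSingularValues charpoly into the (a i : ℝ) form
lemma mySVprod {N : ℕ} (σ : Fin N → ℝ) :
    (∏ i : Fin N, (X - C ((σ i : ℂ) ^ 2))) = ∏ i : Fin N, (X - C (((σ i ^ 2 : ℝ) : ℂ))) := by
  refine Finset.prod_congr rfl fun i _ => ?_
  push_cast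
  ring_nf

/-- Inductive step for the singular-value growth rate theorem: via a Schur
triangularization `A = U T Uᴴ` with upper triangular `T` having diagonal
`π₁, …, πₙ` (nonzero, decreasing moduli), if the singular values of powers of the
two principal submatrices of `T` (deleting the first, resp. last, row and column)
have growth rates `|π₂|, …, |πₙ|`, resp. `|π₁|, …, |π_{n−1}|`, then for every
intermediate index `i` one has
`limsup σᵢ(Aᵐ)^{1/m} ≤ |πᵢ| ≤ liminf σᵢ(Aᵐ)^{1/m}`. -/
theorem stmt19 {n : ℕ} (A T U : Matrix (Fin (n + 1)) (Fin (n + 1)) ℂ)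
    (hU : Uᴴ * U = 1) (hSchur : A = U * T * Uᴴ)
    (hTut : ∀ i j : Fin (n + 1), j < i → T i j = 0)
    (π : Fin (n + 1) → ℂ) (hdiag : ∀ i, T i i = π i)
    (hord : Antitone fun i => ‖π i‖) (hnz : ∀ i, π i ≠ 0)
    (σ : ℕ → Fin (n + 1) → ℝ) (hσ : ∀ m : ℕ, IsSingularValues (A ^ m) (σ m))
    (σ₁ : ℕ → Fin n → ℝ)
    (hσ₁ : ∀ m : ℕ, IsSingularValues ((T.submatrix Fin.succ Fin.succ) ^ m) (σ₁ m))
    (hlim₁ : ∀ i : Fin n, Tendsto (fun m : ℕ => (σ₁ m i) ^ (1 / (m : ℝ))) atTop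
      (nhds (‖π i.succ‖)))
    (σₙ : ℕ → Fin n → ℝ)
    (hσₙ : ∀ m : ℕ,
      IsSingularValues ((T.submatrix Fin.castSucc Fin.castSucc) ^ m) (σₙ m))
    (hlimₙ : ∀ i : Fin n, Tendsto (fun m : ℕ => (σₙ m i) ^ (1 / (m : ℝ))) atTop
      (nhds (‖π i.castSucc‖)))
    (i : Fin (n + 1)) (h1 : 1 ≤ (i : ℕ)) (h2 : (i : ℕ) < n) :
    limsup (fun m : ℕ => (σ m i) ^ (1 / (m : ℝ))) atTop ≤ ‖π i‖ ∧
    ‖π i‖ ≤ liminf (fun m : ℕ => (σ m i) ^ (1 / (m : ℝ))) atTop := by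
  have hTbt : T.BlockTriangular id := fun a c h => hTut a c h
  have hUU : U * Uᴴ = 1 := mul_eq_one_comm.mp hU
  -- A ^ m = U * T ^ m * Uᴴ
  have hconj : ∀ (X Y : Matrix (Fin (n+1)) (Fin (n+1)) ℂ),
      U * X * Uᴴ * (U * Y * Uᴴ) = U * (X * Y) * Uᴴ := by
    intro X Y
    have hmid : Uᴴ * (U * Y * Uᴴ) = Y * Uᴴ := by
      rw [← Matrix.mul_assoc, ← Matrix.mul_assoc, hU, Matrix.one_mul]
    rw [Matrix.mul_assoc (U * X), hmid, ← Matrix.mul_assoc, Matrix.mul_assoc U X Y]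
  have hAm : ∀ m : ℕ, A ^ m = U * T ^ m * Uᴴ := by
    intro m
    induction m with
    | zero => simp [hUU]
    | succ m ih => rw [pow_succ, ih, hSchur, hconj, ← pow_succ]
  -- index bookkeeping
  have hkn : (i : ℕ) - 1 < n := by omega
  set k₁ : Fin n := ⟨(i : ℕ) - 1, hkn⟩ with hk₁
  set kₙ : Fin n := ⟨(i : ℕ), h2⟩ with hkₙ
  have hsucc : Fin.succ k₁ = i := by
    apply Fin.val_injective
    simp [hk₁]
    omega
  have hcast : Fin.castSucc kₙ = i := by
    apply Fin.val_injective
    simp [hkₙ]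
  -- the key squeeze inequalities
  have hsq : ∀ m : ℕ, σₙ m kₙ ≤ σ m i ∧ σ m i ≤ σ₁ m k₁ := by
    intro m
    obtain ⟨hσa, hσ0, hσc⟩ := hσ m
    obtain ⟨hσ₁a, hσ₁0, hσ₁c⟩ := hσ₁ m
    obtain ⟨hσₙa, hσₙ0, hσₙc⟩ := hσₙ m
    set M : Matrix (Fin (n+1)) (Fin (n+1)) ℂ := T ^ m with hM
    have hMbt : M.BlockTriangular id := myPowTriangular T hTbt m
    -- the sorted squared singular value sequences
    set a : Fin (n+1) → ℝ := fun j => σ m j ^ 2 with ha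
    set b₁ : Fin n → ℝ := fun j => σ₁ m j ^ 2 with hb₁
    set bₙ : Fin n → ℝ := fun j => σₙ m j ^ 2 with hbₙ
    have haA : Antitone a := fun x y hxy => pow_le_pow_left₀ (hσ0 y) (hσa hxy) 2
    have hb₁A : Antitone b₁ := fun x y hxy => pow_le_pow_left₀ (hσ₁0 y) (hσ₁a hxy) 2
    have hbₙA : Antitone bₙ := fun x y hxy => pow_le_pow_left₀ (hσₙ0 y) (hσₙa hxy) 2
    -- charpoly of Mᴴ * M
    have hcpH : (Mᴴ * M).charpoly = ∏ j, (X - C ((a j : ℝ) : ℂ)) := by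
      have h5 : (A ^ m)ᴴ * A ^ m = U * (Mᴴ * M) * Uᴴ := by
        rw [hAm m, ← hM]
        have hct : (U * M * Uᴴ)ᴴ = U * Mᴴ * Uᴴ := by
          rw [conjTranspose_mul, conjTranspose_mul, conjTranspose_conjTranspose,
            ← Matrix.mul_assoc]
        rw [hct, hconj]
      have := hσc
      rw [h5, myCharpolyConj U Uᴴ _ hUU] at this
      rw [this, mySVprod]
    have hHher : (Mᴴ * M).IsHermitian := isHermitian_conjTranspose_mul_self M
    obtain ⟨u, huon, hu⟩ := myEigenbasis (Mᴴ * M) hHher a hcpH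
    -- lower bound : interlacing for the castSucc submatrix
    have hlow : σₙ m kₙ ≤ σ m i := by
      have hsub : (Mᴴ * M).submatrix Fin.castSucc Fin.castSucc =
          ((T.submatrix Fin.castSucc Fin.castSucc) ^ m)ᴴ *
            ((T.submatrix Fin.castSucc Fin.castSucc) ^ m) := by
        rw [myCTMulSub M hMbt, hM, mySubPowCast T hTbt m]
      have hcpH' : ((Mᴴ * M).submatrix Fin.castSucc Fin.castSucc).charpoly
          = ∏ j, (X - C ((bₙ j : ℝ) : ℂ)) := by
        rw [hsub, hσₙc, mySVprod]
      obtain ⟨w, hwon, hw⟩ := myEigenbasis _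
        (hHher.submatrix Fin.castSucc) bₙ hcpH'
      have := myInterlace (Mᴴ * M) Fin.castSucc (Fin.castSucc_injective n)
        a haA bₙ u huon hu w hwon hbₙA (fun j => hw j) kₙ
      rw [hcast] at this
      have h6 : σₙ m kₙ ^ 2 ≤ σ m i ^ 2 := this
      nlinarith [hσ0 i, hσₙ0 kₙ, h6]
    -- upper bound : interlacing for the succ submatrix of M * Mᴴ
    have hup : σ m i ≤ σ₁ m k₁ := by
      have hdetT : IsUnit (det T) := by
        rw [det_of_upperTriangular hTbt]
        simp only [hdiag]
        exact (Finset.prod_ne_zero_iff.mpr fun j _ => hnz j).isUnit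
      have hdetM : IsUnit (det M) := by rw [hM, det_pow]; exact hdetT.pow m
      have hMMinv : M * M⁻¹ = 1 := mul_nonsing_inv M hdetM
      have hsim : M * (Mᴴ * M) * M⁻¹ = M * Mᴴ := by
        rw [← Matrix.mul_assoc, Matrix.mul_assoc (M * Mᴴ) M M⁻¹, hMMinv, Matrix.mul_one]
      have hcpG : (M * Mᴴ).charpoly = ∏ j, (X - C ((a j : ℝ) : ℂ)) := by
        rw [← hsim, myCharpolyConj M M⁻¹ _ hMMinv, hcpH]
      have hGher : (M * Mᴴ).IsHermitian := isHermitian_mul_conjTranspose_self M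
      obtain ⟨u', huon', hu'⟩ := myEigenbasis (M * Mᴴ) hGher a hcpG
      -- submatrix
      set B : Matrix (Fin n) (Fin n) ℂ := (T.submatrix Fin.succ Fin.succ) ^ m with hB
      have hTsbt : (T.submatrix Fin.succ Fin.succ).BlockTriangular id := by
        intro x y hxy
        exact hTut _ _ (by exact_mod_cast Nat.succ_lt_succ hxy)
      have hdetB : IsUnit (det B) := by
        rw [hB, det_pow]
        refine IsUnit.pow m ?_
        rw [det_of_upperTriangular hTsbt]
        refine (Finset.prod_ne_zero_iff.mpr fun j _ => ?_).isUnit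
        simp only [submatrix_apply, hdiag]
        exact hnz _
      have hBBinv : B * B⁻¹ = 1 := mul_nonsing_inv B hdetB
      have hsubG : (M * Mᴴ).submatrix Fin.succ Fin.succ = B * Bᴴ := by
        rw [mySubMulCT M hMbt, hM, mySubPowSucc T hTbt m, ← hB]
      have hsimB : B * (Bᴴ * B) * B⁻¹ = B * Bᴴ := by
        rw [← Matrix.mul_assoc, Matrix.mul_assoc (B * Bᴴ) B B⁻¹, hBBinv, Matrix.mul_one]
      have hcpG' : ((M * Mᴴ).submatrix Fin.succ Fin.succ).charpoly
          = ∏ j, (X - C ((b₁ j : ℝ) : ℂ)) := by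
        rw [hsubG, ← hsimB, myCharpolyConj B B⁻¹ _ hBBinv, hσ₁c, mySVprod]
      obtain ⟨w', hwon', hw'⟩ := myEigenbasis _ (hGher.submatrix Fin.succ) b₁ hcpG'
      have := myInterlace2 (M * Mᴴ) Fin.succ (Fin.succ_injective n)
        a haA b₁ u' huon' hu' w' hwon' hb₁A (fun j => hw' j) k₁
      rw [hsucc] at this
      have h6 : σ m i ^ 2 ≤ σ₁ m k₁ ^ 2 := this
      nlinarith [hσ0 i, hσ₁0 k₁, h6]
    exact ⟨hlow, hup⟩
  -- squeeze in the limit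
  have hσ0' : ∀ m, 0 ≤ σₙ m kₙ := fun m => (hσₙ m).2.1 kₙ
  have htend : Tendsto (fun m : ℕ => (σ m i) ^ (1 / (m : ℝ))) atTop
      (nhds (‖π i‖)) := by
    have hl : Tendsto (fun m : ℕ => (σₙ m kₙ) ^ (1 / (m : ℝ))) atTop
        (nhds (‖π i‖)) := by
      have := hlimₙ kₙ
      rwa [hcast] at this
    have hr : Tendsto (fun m : ℕ => (σ₁ m k₁) ^ (1 / (m : ℝ))) atTop
        (nhds (‖π i‖)) := by
      have := hlim₁ k₁
      rwa [hsucc] at this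
    refine tendsto_of_tendsto_of_tendsto_of_le_of_le hl hr ?_ ?_
    · intro m
      exact Real.rpow_le_rpow (hσ0' m) (hsq m).1 (by positivity)
    · intro m
      exact Real.rpow_le_rpow ((hσ m).2.1 i) (hsq m).2 (by positivity)
  exact ⟨le_of_eq htend.limsup_eq, ge_of_eq htend.liminf_eq⟩
end
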